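/- (Minimality of meta-clusters) Let T be a finite nonempty set of real numbers and ε ≥ 0. Consider any partition 𝒫 of T into nonempty blocks with the property that any x, y ∈ T with |x − y| ≤ ε lie in the same block of 𝒫. Then the total interval length of 𝒫 is at least that of the meta-cluster partition: Σ_{B ∈ 𝒫} (max B − min B) ≥ Σ_{M a meta-cluster of T} (max M − min M). Consequently, among all partitions of T satisfying this ε-compatibility constraint, the partition of T into its meta-clusters minimizes the total interval length Σ (max − min) over blocks. -/

import Mathlib

/-- The ε-chain relation on a finite set `T` of reals: the reflexive–transitive
closure, with all chain points inside `T`, of `|u − v| ≤ ε`. -/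
def ChainRel (T : Finset ℝ) (ε : ℝ) : ℝ → ℝ → Prop :=
  Relation.ReflTransGen (fun u v => u ∈ T ∧ v ∈ T ∧ |u - v| ≤ ε)

open Classical in
/-- The meta-clusters of `T`: the equivalence classes of the ε-chain relation. -/
noncomputable def metaClusters (T : Finset ℝ) (ε : ℝ) : Finset (Finset ℝ) :=
  T.image (fun x => T.filter (fun y => ChainRel T ε x y))

/-- The length of a finite nonempty set of reals is `max − min` (and `0` for `∅`). -/
noncomputable def blockLen (B : Finset ℝ) : ℝ :=
  if h : B.Nonempty then B.max' h - B.min' h else 0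

section Aux

open MeasureTheory

lemma chainRel_symm {T : Finset ℝ} {ε x y : ℝ} (h : ChainRel T ε x y) :
    ChainRel T ε y x := by
  refine (@Relation.ReflTransGen.stdSymm _ _ ⟨?_⟩).symm _ _ h
  intro a b ⟨ha, hb, hab⟩
  exact ⟨hb, ha, by rwa [abs_sub_comm]⟩

lemma chainRel_trans {T : Finset ℝ} {ε x y z : ℝ} (h1 : ChainRel T ε x y)
    (h2 : ChainRel T ε y z) : ChainRel T ε x z :=
  Relation.ReflTransGen.trans h1 h2

/-- If there is a chain from `x` to `y` and `z ∈ T` with `x ≤ z ≤ y`, then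
there is a chain from `x` to `z`. -/
lemma chain_between {T : Finset ℝ} {ε x y : ℝ} (h : ChainRel T ε x y) :
    ∀ z ∈ T, x ≤ z → z ≤ y → ChainRel T ε x z := by
  induction h with
  | refl =>
    intro z _ h1 h2
    exact le_antisymm h1 h2 ▸ Relation.ReflTransGen.refl
  | @tail b c hxb hbc ih =>
    intro z hz h1 h2
    rcases le_or_gt z b with hzb | hbz
    · exact ih z hz h1 hzb
    · refine hxb.tail ⟨hbc.1, hz, ?_⟩
      have h3 : |b - z| = z - b := by rw [abs_sub_comm, abs_of_nonneg (by linarith)]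
      have h4 : c - b ≤ |b - c| := by rw [abs_sub_comm]; exact le_abs_self _
      linarith [hbc.2.2]

/-- A chain never leaves the block of its starting point. -/
lemma chain_stays {T : Finset ℝ} {ε : ℝ} {P : Finset (Finset ℝ)}
    (hdisj : ∀ B₁ ∈ P, ∀ B₂ ∈ P, B₁ ≠ B₂ → Disjoint B₁ B₂)
    (hcompat : ∀ x ∈ T, ∀ y ∈ T, |x - y| ≤ ε → ∃ B ∈ P, x ∈ B ∧ y ∈ B)
    {x y : ℝ} (h : ChainRel T ε x y) {B : Finset ℝ} (hB : B ∈ P) (hx : x ∈ B) :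
    y ∈ B := by
  induction h with
  | refl => exact hx
  | @tail b c hxb hbc ih =>
    obtain ⟨B', hB', hbB', hcB'⟩ := hcompat b hbc.1 c hbc.2.1 hbc.2.2
    by_cases hBB : B' = B
    · exact hBB ▸ hcB'
    · exact absurd (Finset.disjoint_left.1 (hdisj B' hB' B hB hBB) hbB' ih) (by simp)

open Classical in
lemma mem_metaClusters_iff {T : Finset ℝ} {ε : ℝ} {M : Finset ℝ} :
    M ∈ metaClusters T ε ↔ ∃ x ∈ T, M = T.filter (fun y => ChainRel T ε x y) := by
  unfold metaClusters
  rw [Finset.mem_image]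
  constructor
  · rintro ⟨x, hx, rfl⟩; exact ⟨x, hx, rfl⟩
  · rintro ⟨x, hx, rfl⟩; exact ⟨x, hx, rfl⟩

lemma metaCluster_subset {T : Finset ℝ} {ε : ℝ} {M : Finset ℝ}
    (h : M ∈ metaClusters T ε) : M ⊆ T := by
  classical
  obtain ⟨x, _, rfl⟩ := mem_metaClusters_iff.1 h
  exact Finset.filter_subset _ _

lemma metaCluster_nonempty {T : Finset ℝ} {ε : ℝ} {M : Finset ℝ}
    (h : M ∈ metaClusters T ε) : M.Nonempty := by
  classical
  obtain ⟨x, hx, rfl⟩ := mem_metaClusters_iff.1 h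
  exact ⟨x, Finset.mem_filter.2 ⟨hx, Relation.ReflTransGen.refl⟩⟩

lemma metaClusters_disjoint {T : Finset ℝ} {ε : ℝ} {M₁ M₂ : Finset ℝ}
    (h1 : M₁ ∈ metaClusters T ε) (h2 : M₂ ∈ metaClusters T ε) (hne : M₁ ≠ M₂) :
    Disjoint M₁ M₂ := by
  classical
  obtain ⟨x, hx, rfl⟩ := mem_metaClusters_iff.1 h1
  obtain ⟨y, hy, rfl⟩ := mem_metaClusters_iff.1 h2
  rw [Finset.disjoint_left]
  intro z hz1 hz2
  apply hne
  have hxz := (Finset.mem_filter.1 hz1).2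
  have hyz := (Finset.mem_filter.1 hz2).2
  ext w
  simp only [Finset.mem_filter]
  constructor
  · rintro ⟨hw, hxw⟩
    exact ⟨hw, chainRel_trans hyz (chainRel_trans (chainRel_symm hxz) hxw)⟩
  · rintro ⟨hw, hyw⟩
    exact ⟨hw, chainRel_trans hxz (chainRel_trans (chainRel_symm hyz) hyw)⟩

/-- Meta-clusters are order-convex in `T`. -/
lemma metaCluster_convex {T : Finset ℝ} {ε : ℝ} {M : Finset ℝ}
    (h : M ∈ metaClusters T ε) {a b z : ℝ} (ha : a ∈ M) (hb : b ∈ M)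
    (hz : z ∈ T) (haz : a ≤ z) (hzb : z ≤ b) : z ∈ M := by
  classical
  obtain ⟨x, hx, rfl⟩ := mem_metaClusters_iff.1 h
  have hxa := (Finset.mem_filter.1 ha).2
  have hxb := (Finset.mem_filter.1 hb).2
  have hab : ChainRel T ε a b := chainRel_trans (chainRel_symm hxa) hxb
  have haz' : ChainRel T ε a z := chain_between hab z hz haz hzb
  exact Finset.mem_filter.2 ⟨hz, chainRel_trans hxa haz'⟩

/-- The interval spanned by a finite set. -/
noncomputable def iv (M : Finset ℝ) : Set ℝ :=
  if h : M.Nonempty then Set.Icc (M.min' h) (M.max' h) else ∅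

lemma volume_iv (M : Finset ℝ) : (volume (iv M)).toReal = blockLen M := by
  unfold iv blockLen
  by_cases h : M.Nonempty
  · rw [dif_pos h, dif_pos h, Real.volume_Icc,
      ENNReal.toReal_ofReal (by linarith [M.min'_le (M.max' h) (M.max'_mem h)])]
  · rw [dif_neg h, dif_neg h]; simp

lemma volume_iv_ne_top (M : Finset ℝ) : volume (iv M) ≠ ⊤ := by
  unfold iv
  by_cases h : M.Nonempty
  · rw [dif_pos h]; exact (measure_Icc_lt_top).ne
  · rw [dif_neg h]; simp

lemma iv_subset {M B : Finset ℝ} (hB : B.Nonempty) (hMB : M ⊆ B) : iv M ⊆ iv B := by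
  unfold iv
  by_cases h : M.Nonempty
  · rw [dif_pos h, dif_pos hB]
    exact Set.Icc_subset_Icc (B.min'_le _ (hMB (M.min'_mem h)))
      (B.le_max' _ (hMB (M.max'_mem h)))
  · rw [dif_neg h]; exact Set.empty_subset _

lemma measurable_iv (M : Finset ℝ) : MeasurableSet (iv M) := by
  unfold iv
  by_cases h : M.Nonempty
  · rw [dif_pos h]; exact measurableSet_Icc
  · rw [dif_neg h]; exact MeasurableSet.empty

/-- Distinct meta-clusters span disjoint intervals. -/
lemma iv_disjoint {T : Finset ℝ} {ε : ℝ} {M₁ M₂ : Finset ℝ}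
    (h1 : M₁ ∈ metaClusters T ε) (h2 : M₂ ∈ metaClusters T ε) (hne : M₁ ≠ M₂) :
    Disjoint (iv M₁) (iv M₂) := by
  have hne1 := metaCluster_nonempty h1
  have hne2 := metaCluster_nonempty h2
  rw [Set.disjoint_left]
  intro p hp1 hp2
  rw [iv, dif_pos hne1] at hp1
  rw [iv, dif_pos hne2] at hp2
  have hd := metaClusters_disjoint h1 h2 hne
  rcases le_total (M₁.min' hne1) (M₂.min' hne2) with hmm | hmm
  · -- min M₂ lies in [min M₁, max M₁]
    have : M₂.min' hne2 ∈ M₁ :=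
      metaCluster_convex h1 (M₁.min'_mem hne1) (M₁.max'_mem hne1)
        (metaCluster_subset h2 (M₂.min'_mem hne2)) hmm (le_trans hp2.1 hp1.2)
    exact Finset.disjoint_left.1 hd this (M₂.min'_mem hne2)
  · have : M₁.min' hne1 ∈ M₂ :=
      metaCluster_convex h2 (M₂.min'_mem hne2) (M₂.max'_mem hne2)
        (metaCluster_subset h1 (M₁.min'_mem hne1)) hmm (le_trans hp1.1 hp2.2)
    exact Finset.disjoint_left.1 hd (M₁.min'_mem hne1) this

/-- Disjoint intervals inside a block: lengths add up to at most the block length. -/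
lemma sum_blockLen_le {B : Finset ℝ} (hB : B.Nonempty) (S : Finset (Finset ℝ))
    (hsub : ∀ M ∈ S, M ⊆ B)
    (hdisjiv : ∀ M₁ ∈ S, ∀ M₂ ∈ S, M₁ ≠ M₂ → Disjoint (iv M₁) (iv M₂)) :
    ∑ M ∈ S, blockLen M ≤ blockLen B := by
  have hmeas : volume (⋃ M ∈ S, iv M) = ∑ M ∈ S, volume (iv M) :=
    MeasureTheory.measure_biUnion_finset
      (fun M₁ h1 M₂ h2 h12 => hdisjiv M₁ h1 M₂ h2 h12)
      (fun M _ => measurable_iv M)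
  calc ∑ M ∈ S, blockLen M = ∑ M ∈ S, (volume (iv M)).toReal := by
        simp [volume_iv]
    _ = (∑ M ∈ S, volume (iv M)).toReal :=
        (ENNReal.toReal_sum (fun M _ => volume_iv_ne_top M)).symm
    _ = (volume (⋃ M ∈ S, iv M)).toReal := by rw [hmeas]
    _ ≤ (volume (iv B)).toReal := by
        refine ENNReal.toReal_mono (volume_iv_ne_top B) (measure_mono ?_)
        exact Set.iUnion₂_subset fun M hM => iv_subset hB (hsub M hM)
    _ = blockLen B := volume_iv B

end Aux

theorem metaClusters_minimize_total_length (T : Finset ℝ) (hT : T.Nonempty)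
    (ε : ℝ) (hε : 0 ≤ ε) (P : Finset (Finset ℝ))
    (hne : ∀ B ∈ P, B.Nonempty) (hsub : ∀ B ∈ P, B ⊆ T)
    (hdisj : ∀ B₁ ∈ P, ∀ B₂ ∈ P, B₁ ≠ B₂ → Disjoint B₁ B₂)
    (hcover : ∀ x ∈ T, ∃ B ∈ P, x ∈ B)
    (hcompat : ∀ x ∈ T, ∀ y ∈ T, |x - y| ≤ ε → ∃ B ∈ P, x ∈ B ∧ y ∈ B) :
    ∑ M ∈ metaClusters T ε, blockLen M ≤ ∑ B ∈ P, blockLen B := by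
  classical
  -- each meta-cluster is contained in some block
  have key : ∀ M ∈ metaClusters T ε, ∃ B ∈ P, M ⊆ B := by
    intro M hM
    obtain ⟨x, hx, rfl⟩ := mem_metaClusters_iff.1 hM
    obtain ⟨B, hB, hxB⟩ := hcover x hx
    refine ⟨B, hB, fun y hy => ?_⟩
    exact chain_stays hdisj hcompat (Finset.mem_filter.1 hy).2 hB hxB
  obtain ⟨f, hfP, hfsub⟩ : ∃ f : Finset ℝ → Finset ℝ,
      (∀ M ∈ metaClusters T ε, f M ∈ P) ∧ (∀ M ∈ metaClusters T ε, M ⊆ f M) := by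
    refine ⟨fun M => if h : ∃ B ∈ P, M ⊆ B then h.choose else ∅, ?_, ?_⟩
    · intro M hM
      have h := key M hM
      simp only [dif_pos h]
      exact h.choose_spec.1
    · intro M hM
      have h := key M hM
      simp only [dif_pos h]
      exact h.choose_spec.2
  rw [← Finset.sum_fiberwise_of_maps_to hfP blockLen]
  refine Finset.sum_le_sum fun B hB => ?_
  refine sum_blockLen_le (hne B hB) _ ?_ ?_
  · intro M hM
    rw [Finset.mem_filter] at hM
    exact hM.2 ▸ hfsub M hM.1
  · intro M₁ h1 M₂ h2 h12
    rw [Finset.mem_filter] at h1 h2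
    exact iv_disjoint h1.1 h2.1 h12
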